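/- A geodesic metric space X is δ-hyperbolic for some δ if and only if for every C > 0 there exists C' > 0 such that whenever A and B are (1, C)-quasigeodesic subspaces of X with A ∩ B ≠ ∅, the union A ∪ B is a (1, C')-quasigeodesic subspace of X. -/
import Mathlib


/-- `f` restricted to `[0, v]` is a (unit-speed) geodesic: `v ≥ 0` and `f` is an
isometric embedding of `[0, v]` into `X`. -/
def IsGeodesicOn {X : Type*} [MetricSpace X] (f : ℝ → X) (v : ℝ) : Prop :=
  0 ≤ v ∧ ∀ x ∈ Set.Icc (0 : ℝ) v, ∀ y ∈ Set.Icc (0 : ℝ) v, dist (f x) (f y) = |x - y|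

/-- `f : [0, v] → X` is a geodesic from `a` to `b`. -/
def IsGeodesicFrom {X : Type*} [MetricSpace X] (f : ℝ → X) (v : ℝ) (a b : X) : Prop :=
  IsGeodesicOn f v ∧ f 0 = a ∧ f v = b

/-- `X` is a geodesic metric space: any two points are joined by a geodesic. -/
def IsGeodesicSpace (X : Type*) [MetricSpace X] : Prop :=
  ∀ a b : X, ∃ (f : ℝ → X) (v : ℝ), IsGeodesicFrom f v a b

/-- `X` is δ-hyperbolic (in the sense of Gromov, via thin triangles): for any geodesic
triangle with vertices `a`, `b`, `c`, the side `[b, c]` lies in the δ-neighbourhood of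
the union of the sides `[a, b]` and `[a, c]`. -/
def IsDeltaHyperbolic (X : Type*) [MetricSpace X] (δ : ℝ) : Prop :=
  ∀ (a b c : X) (f₁ f₂ f₃ : ℝ → X) (v₁ v₂ v₃ : ℝ),
    IsGeodesicFrom f₁ v₁ a b → IsGeodesicFrom f₂ v₂ b c → IsGeodesicFrom f₃ v₃ a c →
    ∀ x ∈ Set.Icc (0 : ℝ) v₂,
      Metric.infDist (f₂ x) (f₁ '' Set.Icc (0 : ℝ) v₁ ∪ f₃ '' Set.Icc (0 : ℝ) v₃) ≤ δ

/-- `A` is a geodesic subspace of `X`: any two points of `A` are joined by a geodesic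
whose image lies in `A`. -/
def IsGeodesicSubspace {X : Type*} [MetricSpace X] (A : Set X) : Prop :=
  ∀ a ∈ A, ∀ b ∈ A, ∃ (f : ℝ → X) (v : ℝ),
    IsGeodesicFrom f v a b ∧ f '' Set.Icc (0 : ℝ) v ⊆ A

/-- `f` restricted to `[0, v]` is a `(lam, C)`-quasigeodesic. -/
def IsQuasigeodesicOn {X : Type*} [MetricSpace X] (lam C : ℝ) (f : ℝ → X) (v : ℝ) : Prop :=
  0 ≤ v ∧ ∀ x ∈ Set.Icc (0 : ℝ) v, ∀ y ∈ Set.Icc (0 : ℝ) v,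
    lam⁻¹ * |x - y| - C ≤ dist (f x) (f y) ∧ dist (f x) (f y) ≤ lam * |x - y| + C

/-- `A` is a `(lam, C)`-quasigeodesic subspace of `X`: any two points of `A` are joined
by a `(lam, C)`-quasigeodesic whose image lies in `A`. -/
def IsQuasigeodesicSubspace {X : Type*} [MetricSpace X] (lam C : ℝ) (A : Set X) : Prop :=
  ∀ a ∈ A, ∀ b ∈ A, ∃ (f : ℝ → X) (v : ℝ),
    IsQuasigeodesicOn lam C f v ∧ f 0 = a ∧ f v = b ∧ f '' Set.Icc (0 : ℝ) v ⊆ A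

/-- `S` is a geodesic segment: the image of an isometric embedding of a closed interval. -/
def IsGeodesicSegment {X : Type*} [MetricSpace X] (S : Set X) : Prop :=
  ∃ (f : ℝ → X) (v : ℝ), IsGeodesicOn f v ∧ S = f '' Set.Icc (0 : ℝ) v

open Set Metric

lemma IsGeodesicFrom.dist_eq' {X : Type*} [MetricSpace X] {f : ℝ → X} {v : ℝ} {a b : X}
    (h : IsGeodesicFrom f v a b) : dist a b = v := by
  rw [← h.2.1, ← h.2.2, h.1.2 0 ⟨le_rfl, h.1.1⟩ v ⟨h.1.1, le_rfl⟩]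
  rw [abs_sub_comm, sub_zero, abs_of_nonneg h.1.1]

lemma qg_mono {X : Type*} [MetricSpace X] {C C' : ℝ} (h : C ≤ C')
    {f : ℝ → X} {v : ℝ} (hf : IsQuasigeodesicOn 1 C f v) : IsQuasigeodesicOn 1 C' f v := by
  refine ⟨hf.1, fun x hx y hy => ?_⟩
  obtain ⟨h1, h2⟩ := hf.2 x hx y hy
  constructor <;> linarith

lemma seg_qgs {X : Type*} [MetricSpace X] {f : ℝ → X} {v C : ℝ}
    (hf : IsGeodesicOn f v) (hC : 0 < C) :
    IsQuasigeodesicSubspace 1 C (f '' Set.Icc 0 v) := by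
  rintro a ⟨y, hy, rfl⟩ b ⟨y', hy', rfl⟩
  rcases le_total y y' with hle | hle
  · refine ⟨fun t => f (y + t), y' - y, ⟨by linarith, fun t ht t' ht' => ?_⟩,
      by show f (y + 0) = f y; rw [add_zero], by show f (y + (y' - y)) = f y'; rw [show y + (y' - y) = y' by ring], ?_⟩
    · have hm : y + t ∈ Set.Icc (0:ℝ) v := ⟨by linarith [ht.1, hy.1], by linarith [ht.2, hy'.2]⟩
      have hm' : y + t' ∈ Set.Icc (0:ℝ) v := ⟨by linarith [ht'.1, hy.1], by linarith [ht'.2, hy'.2]⟩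
      rw [hf.2 _ hm _ hm', show y + t - (y + t') = t - t' by ring]
      simp only [inv_one, one_mul]
      constructor <;> linarith
    · rintro _ ⟨t, ht, rfl⟩
      exact ⟨y + t, ⟨by linarith [ht.1, hy.1], by linarith [ht.2, hy'.2]⟩, rfl⟩
  · refine ⟨fun t => f (y - t), y - y', ⟨by linarith, fun t ht t' ht' => ?_⟩,
      by show f (y - 0) = f y; rw [sub_zero], by show f (y - (y - y')) = f y'; rw [show y - (y - y') = y' by ring], ?_⟩
    · have hm : y - t ∈ Set.Icc (0:ℝ) v := ⟨by linarith [ht.2, hy'.1], by linarith [ht.1, hy.2]⟩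
      have hm' : y - t' ∈ Set.Icc (0:ℝ) v := ⟨by linarith [ht'.2, hy'.1], by linarith [ht'.1, hy.2]⟩
      rw [hf.2 _ hm _ hm', show y - t - (y - t') = t' - t by ring, abs_sub_comm]
      simp only [inv_one, one_mul]
      constructor <;> linarith
    · rintro _ ⟨t, ht, rfl⟩
      exact ⟨y - t, ⟨by linarith [ht.2, hy'.1], by linarith [ht.1, hy.2]⟩, rfl⟩

lemma coarse_ivt {h : ℝ → ℝ} {w C u₀ : ℝ} (hw : 0 ≤ w) (hC : 0 ≤ C)
    (hlip : ∀ t ∈ Set.Icc (0:ℝ) w, ∀ t' ∈ Set.Icc (0:ℝ) w, |h t - h t'| ≤ |t - t'| + C)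
    (h0 : h 0 ≤ u₀) (hwu : u₀ ≤ h w) : ∃ t ∈ Set.Icc (0:ℝ) w, |h t - u₀| ≤ C + 1 := by
  have hT0 : (0:ℝ) ∈ {t | t ∈ Set.Icc (0:ℝ) w ∧ h t ≤ u₀} := ⟨⟨le_rfl, hw⟩, h0⟩
  set T := {t | t ∈ Set.Icc (0:ℝ) w ∧ h t ≤ u₀} with hTdef
  have hTne : T.Nonempty := ⟨0, hT0⟩
  have hTbdd : BddAbove T := ⟨w, fun t ht => ht.1.2⟩
  have hs0 : 0 ≤ sSup T := le_csSup hTbdd hT0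
  have hsw : sSup T ≤ w := csSup_le hTne fun t ht => ht.1.2
  have ht₂m : min (sSup T + 1/2) w ∈ Set.Icc (0:ℝ) w :=
    ⟨le_min (by linarith) hw, min_le_right _ _⟩
  by_cases hcase : h (min (sSup T + 1/2) w) ≤ u₀
  · have hle : min (sSup T + 1/2) w ≤ sSup T := le_csSup hTbdd ⟨ht₂m, hcase⟩
    have hww : min (sSup T + 1/2) w = w := by
      rcases min_cases (sSup T + 1/2) w with ⟨he, _⟩ | ⟨he, _⟩
      · rw [he] at hle; linarith
      · exact he
    have : h (min (sSup T + 1/2) w) = u₀ := le_antisymm hcase (by rw [hww]; exact hwu)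
    exact ⟨_, ht₂m, by rw [this]; simp; linarith⟩
  · obtain ⟨t₁, ht₁T, ht₁gt⟩ := exists_lt_of_lt_csSup hTne
      (show sSup T - 1/2 < sSup T by linarith)
    have ht₁s : t₁ ≤ sSup T := le_csSup hTbdd ht₁T
    have ht₁₂ : t₁ ≤ min (sSup T + 1/2) w := le_min (by linarith) ht₁T.1.2
    have habs : |min (sSup T + 1/2) w - t₁| ≤ 1 := by
      rw [abs_of_nonneg (by linarith)]
      have := min_le_left (sSup T + 1/2) w
      linarith
    have hlb := hlip _ ht₂m t₁ ht₁T.1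
    rw [abs_le] at hlb
    refine ⟨t₁, ht₁T.1, ?_⟩
    rw [abs_le]
    push_neg at hcase
    constructor
    · have := hlb.2
      have h2 := le_trans this (by linarith : |min (sSup T + 1/2) w - t₁| + C ≤ 1 + C)
      linarith
    · linarith [ht₁T.2]

lemma almost_between_close {X : Type*} [MetricSpace X] {δ : ℝ} (hδ : 0 ≤ δ)
    (hX : IsDeltaHyperbolic X δ) (hgeo : IsGeodesicSpace X)
    {b c q : X} {γ : ℝ → X} {v k : ℝ} (hγ : IsGeodesicFrom γ v b c)
    (hbtw : dist b q + dist q c ≤ dist b c + k) :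
    ∃ x ∈ Set.Icc (0:ℝ) v, dist q (γ x) ≤ 3*δ + k + 5 := by
  obtain ⟨σ, s, hσ⟩ := hgeo q b
  obtain ⟨τ, r, hτ⟩ := hgeo q c
  have hthin := hX q b c σ γ τ s v r hσ hγ hτ
  have hdqb : dist q b = s := hσ.dist_eq'
  have hdqc : dist q c = r := hτ.dist_eq'
  have hdbc : dist b c = v := hγ.dist_eq'
  -- the set of parameters where γ is close to σ
  set T := {x | x ∈ Set.Icc (0:ℝ) v ∧ ∃ u ∈ Set.Icc (0:ℝ) s, dist (γ x) (σ u) ≤ δ + 1}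
    with hTdef
  have hT0 : (0:ℝ) ∈ T := by
    refine ⟨⟨le_rfl, hγ.1.1⟩, s, ⟨hσ.1.1, le_rfl⟩, ?_⟩
    rw [hγ.2.1, hσ.2.2]
    simp only [dist_self]; linarith
  have hTne : T.Nonempty := ⟨0, hT0⟩
  have hTbdd : BddAbove T := ⟨v, fun t ht => ht.1.2⟩
  have hs0 : 0 ≤ sSup T := le_csSup hTbdd hT0
  have hsv : sSup T ≤ v := csSup_le hTne fun t ht => ht.1.2
  set x₂ := min (sSup T + 1) v with hx₂def
  have hx₂m : x₂ ∈ Set.Icc (0:ℝ) v := ⟨le_min (by linarith) hγ.1.1, min_le_right _ _⟩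
  -- there is a point of τ within δ+1 of γ x₂
  have hwit : ∃ u' ∈ Set.Icc (0:ℝ) r, dist (γ x₂) (τ u') ≤ δ + 1 := by
    have hne : (σ '' Set.Icc 0 s ∪ τ '' Set.Icc 0 r).Nonempty :=
      ⟨σ 0, Or.inl ⟨0, ⟨le_rfl, hσ.1.1⟩, rfl⟩⟩
    obtain ⟨z, hz, hdz⟩ := (Metric.infDist_lt_iff hne).mp
      (lt_of_le_of_lt (hthin x₂ hx₂m) (by linarith : δ < δ + 1))
    rcases hz with ⟨u, hu, rfl⟩ | ⟨u, hu, rfl⟩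
    · -- then x₂ ∈ T, forcing x₂ = v, trivial witness
      have hx₂T : x₂ ∈ T := ⟨hx₂m, u, hu, hdz.le⟩
      have hle : x₂ ≤ sSup T := le_csSup hTbdd hx₂T
      have hx₂v : x₂ = v := by
        rcases min_cases (sSup T + 1) v with ⟨he, _⟩ | ⟨he, _⟩
        · rw [hx₂def, he] at hle; linarith
        · rw [hx₂def, he]
      refine ⟨r, ⟨hτ.1.1, le_rfl⟩, ?_⟩
      rw [hx₂v, hγ.2.2, hτ.2.2]
      simp only [dist_self]; linarith
    · exact ⟨u, hu, hdz.le⟩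
  obtain ⟨u', hu', hz₂⟩ := hwit
  obtain ⟨x₁, hx₁T, hx₁gt⟩ := exists_lt_of_lt_csSup hTne
    (show sSup T - 1 < sSup T by linarith)
  obtain ⟨hx₁m, u, hu, hz₁⟩ := hx₁T
  have hx₁s : x₁ ≤ sSup T := le_csSup hTbdd ⟨hx₁m, u, hu, hz₁⟩
  -- distance identities along the geodesics
  have e1 : dist (σ u) b = s - u := by
    rw [← hσ.2.2, hσ.1.2 u hu s ⟨hσ.1.1, le_rfl⟩, abs_of_nonpos (by linarith [hu.2]), neg_sub]
  have e2 : dist q (σ u) = u := by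
    rw [← hσ.2.1, hσ.1.2 0 ⟨le_rfl, hσ.1.1⟩ u hu, abs_sub_comm, sub_zero, abs_of_nonneg hu.1]
  have e3 : dist q (τ u') = u' := by
    rw [← hτ.2.1, hτ.1.2 0 ⟨le_rfl, hτ.1.1⟩ u' hu', abs_sub_comm, sub_zero, abs_of_nonneg hu'.1]
  have e4 : dist (τ u') c = r - u' := by
    rw [← hτ.2.2, hτ.1.2 u' hu' r ⟨hτ.1.1, le_rfl⟩, abs_of_nonpos (by linarith [hu'.2]), neg_sub]
  have e5 : dist (γ x₁) (γ x₂) ≤ 2 := by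
    rw [hγ.1.2 x₁ hx₁m x₂ hx₂m]
    rw [abs_le]
    constructor
    · have := min_le_left (sSup T + 1) v
      rw [← hx₂def] at this
      linarith
    · have hx₁x₂ : x₁ ≤ x₂ := le_min (by linarith) hx₁m.2
      linarith
  -- chain of triangle inequalities
  have t1 : dist b c ≤ dist b (σ u) + dist (σ u) c := dist_triangle _ _ _
  have t2 : dist (σ u) c ≤ dist (σ u) (τ u') + dist (τ u') c := dist_triangle _ _ _
  have t3 : dist (σ u) (τ u') ≤ dist (σ u) (γ x₁) + dist (γ x₁) (γ x₂) + dist (γ x₂) (τ u') :=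
    dist_triangle4 _ _ _ _
  have hc1 : dist b (σ u) = s - u := by rw [dist_comm]; exact e1
  have hc2 : dist (σ u) (γ x₁) = dist (γ x₁) (σ u) := dist_comm _ _
  have hc3 : dist b q = dist q b := dist_comm _ _
  have huu' : u + u' ≤ 2*δ + k + 4 := by linarith
  refine ⟨x₂, hx₂m, ?_⟩
  have tfin : dist q (γ x₂) ≤ dist q (τ u') + dist (τ u') (γ x₂) := dist_triangle _ _ _
  rw [dist_comm (τ u') (γ x₂)] at tfin
  linarith [hu.1, hu'.1]

lemma geodesic_near_qg {X : Type*} [MetricSpace X] {δ C : ℝ} (hδ : 0 ≤ δ) (hC : 0 < C)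
    (hX : IsDeltaHyperbolic X δ) (hgeo : IsGeodesicSpace X)
    {α g : ℝ → X} {T v : ℝ} {p a : X}
    (hα : IsQuasigeodesicOn 1 C α T) (hα0 : α 0 = p) (hαT : α T = a)
    (hg : IsGeodesicFrom g v p a) :
    ∀ u ∈ Set.Icc (0:ℝ) v, ∃ t ∈ Set.Icc (0:ℝ) T, dist (g u) (α t) ≤ 6*δ + 7*C + 11 := by
  intro u hu
  have hpa : dist p a = v := hg.dist_eq'
  have h0T : (0:ℝ) ∈ Set.Icc (0:ℝ) T := ⟨le_rfl, hα.1⟩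
  have hTT : T ∈ Set.Icc (0:ℝ) T := ⟨hα.1, le_rfl⟩
  -- coarse IVT on t ↦ dist p (α t)
  have hlip : ∀ t ∈ Set.Icc (0:ℝ) T, ∀ t' ∈ Set.Icc (0:ℝ) T,
      |dist p (α t) - dist p (α t')| ≤ |t - t'| + C := by
    intro t ht t' ht'
    have h1 : |dist (α t) p - dist (α t') p| ≤ dist (α t) (α t') := abs_dist_sub_le _ _ _
    have h2 := (hα.2 t ht t' ht').2
    rw [one_mul] at h2
    rw [dist_comm (α t) p, dist_comm (α t') p] at h1
    linarith
  have hivt : ∃ t ∈ Set.Icc (0:ℝ) T, |dist p (α t) - u| ≤ C + 1 := by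
    refine coarse_ivt hα.1 hC.le hlip ?_ ?_
    · rw [hα0]; simp only [dist_self]; exact hu.1
    · rw [hαT, hpa]; exact hu.2
  obtain ⟨t, ht, hivt⟩ := hivt
  -- α t is almost between p and a
  have hb1 : dist p (α t) ≤ t + C := by
    have := (hα.2 0 h0T t ht).2
    rw [one_mul, hα0] at this
    rw [abs_sub_comm, sub_zero, abs_of_nonneg ht.1] at this
    exact this
  have hb2 : dist (α t) a ≤ (T - t) + C := by
    have := (hα.2 t ht T hTT).2
    rw [one_mul, hαT] at this
    rw [abs_of_nonpos (by linarith [ht.2]), neg_sub] at this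
    exact this
  have hb3 : T - C ≤ dist p a := by
    have := (hα.2 0 h0T T hTT).1
    rw [inv_one, one_mul, hα0, hαT] at this
    rw [abs_sub_comm, sub_zero, abs_of_nonneg hα.1] at this
    exact this
  have hbtw : dist p (α t) + dist (α t) a ≤ dist p a + 3*C := by linarith
  obtain ⟨x₂, hx₂, hclose⟩ := almost_between_close hδ hX hgeo hg hbtw
  -- position of x₂
  have hpx₂ : dist p (g x₂) = x₂ := by
    rw [← hg.2.1, hg.1.2 0 ⟨le_rfl, hg.1.1⟩ x₂ hx₂, abs_sub_comm, sub_zero,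
      abs_of_nonneg hx₂.1]
  have hpos : |x₂ - dist p (α t)| ≤ 3*δ + 3*C + 5 := by
    have h1 : |dist (g x₂) p - dist (α t) p| ≤ dist (g x₂) (α t) := abs_dist_sub_le _ _ _
    rw [dist_comm (g x₂) p, dist_comm (α t) p, hpx₂, dist_comm (g x₂) (α t)] at h1
    linarith
  have tfin : dist (g u) (α t) ≤ dist (g u) (g x₂) + dist (g x₂) (α t) := dist_triangle _ _ _
  have hguv : dist (g u) (g x₂) = |u - x₂| := hg.1.2 u hu x₂ hx₂
  have habs : |u - x₂| ≤ |u - dist p (α t)| + |dist p (α t) - x₂| := by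
    have := abs_sub_le u (dist p (α t)) x₂
    linarith
  rw [abs_sub_comm] at hpos
  rw [dist_comm (g x₂) (α t)] at tfin
  refine ⟨t, ht, ?_⟩
  have habs2 : |u - dist p (α t)| = |dist p (α t) - u| := abs_sub_comm _ _
  linarith

lemma mixed_qg {X : Type*} [MetricSpace X] {δ C : ℝ} (hδ : 0 ≤ δ) (hC : 0 < C)
    (hX : IsDeltaHyperbolic X δ) (hgeo : IsGeodesicSpace X)
    {A B : Set X} (hA : IsQuasigeodesicSubspace 1 C A) (hB : IsQuasigeodesicSubspace 1 C B)
    {p : X} (hpA : p ∈ A) (hpB : p ∈ B) {a b : X} (ha : a ∈ A) (hb : b ∈ B) :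
    ∃ (f : ℝ → X) (v : ℝ), IsQuasigeodesicOn 1 (14*δ + 15*C + 25) f v ∧ f 0 = a ∧ f v = b ∧
      f '' Set.Icc (0:ℝ) v ⊆ A ∪ B := by
  classical
  obtain ⟨α, Tα, hα, hα0, hαT, hαA⟩ := hA p hpA a ha
  obtain ⟨β, Tβ, hβ, hβ0, hβT, hβB⟩ := hB p hpB b hb
  obtain ⟨γ, v, hγ⟩ := hgeo a b
  obtain ⟨g₁, v₁, hg₁⟩ := hgeo p a
  obtain ⟨g₃, v₃, hg₃⟩ := hgeo p b
  have main : ∀ x ∈ Set.Icc (0:ℝ) v, ∃ y, y ∈ A ∪ B ∧ dist (γ x) y ≤ 7*δ + 7*C + 12 := by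
    intro x hx
    have hthin := hX p a b g₁ γ g₃ v₁ v v₃ hg₁ hγ hg₃ x hx
    have hne : (g₁ '' Set.Icc 0 v₁ ∪ g₃ '' Set.Icc 0 v₃).Nonempty :=
      ⟨g₁ 0, Or.inl ⟨0, ⟨le_rfl, hg₁.1.1⟩, rfl⟩⟩
    obtain ⟨z, hz, hdz⟩ := (Metric.infDist_lt_iff hne).mp
      (lt_of_le_of_lt hthin (by linarith : δ < δ + 1))
    rcases hz with ⟨w, hw, rfl⟩ | ⟨w, hw, rfl⟩
    · obtain ⟨t, ht, hqt⟩ := geodesic_near_qg hδ hC hX hgeo hα hα0 hαT hg₁ w hw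
      refine ⟨α t, Or.inl (hαA ⟨t, ht, rfl⟩), ?_⟩
      have := dist_triangle (γ x) (g₁ w) (α t)
      linarith
    · obtain ⟨t, ht, hqt⟩ := geodesic_near_qg hδ hC hX hgeo hβ hβ0 hβT hg₃ w hw
      refine ⟨β t, Or.inr (hβB ⟨t, ht, rfl⟩), ?_⟩
      have := dist_triangle (γ x) (g₃ w) (β t)
      linarith
  have hab : dist a b = v := hγ.dist_eq'
  set F : ℝ → X := fun x =>
    if hx : x ∈ Set.Ioo (0:ℝ) v then Classical.choose (main x ⟨hx.1.le, hx.2.le⟩)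
    else if x ≤ 0 then a else b with hFdef
  have hF0 : F 0 = a := by
    rw [hFdef]
    simp only [Set.mem_Ioo, lt_irrefl, false_and, dite_false, le_refl, if_true]
  have hFv : F v = b := by
    rcases lt_or_eq_of_le hγ.1.1 with hv | hv
    · rw [hFdef]
      simp only [Set.mem_Ioo, lt_irrefl, and_false, dite_false, not_le.mpr hv, if_false]
    · have : a = b := by rw [← dist_eq_zero, hab, ← hv]
      rw [← hv, hF0, this]
  have hFmem : ∀ x ∈ Set.Icc (0:ℝ) v, F x ∈ A ∪ B ∧ dist (γ x) (F x) ≤ 7*δ + 7*C + 12 := by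
    intro x hx
    by_cases hxo : x ∈ Set.Ioo (0:ℝ) v
    · have hspec := Classical.choose_spec (main x ⟨hxo.1.le, hxo.2.le⟩)
      have hFx : F x = Classical.choose (main x ⟨hxo.1.le, hxo.2.le⟩) := by
        rw [hFdef]; simp only [hxo, dite_true]
      rw [hFx]
      exact hspec
    · have hx0 : x = 0 ∨ (x = v ∧ 0 < v) := by
        rcases eq_or_lt_of_le hx.1 with he | hlt
        · exact Or.inl he.symm
        · rcases eq_or_lt_of_le hx.2 with he | hlt2
          · exact Or.inr ⟨he, lt_of_lt_of_le hlt hx.2⟩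
          · exact absurd ⟨hlt, hlt2⟩ hxo
      rcases hx0 with rfl | ⟨rfl, hv⟩
      · rw [hF0, hγ.2.1]
        exact ⟨Or.inl ha, by simp only [dist_self]; linarith⟩
      · rw [hFv, hγ.2.2]
        exact ⟨Or.inr hb, by simp only [dist_self]; linarith⟩
  refine ⟨F, v, ⟨hγ.1.1, ?_⟩, hF0, hFv, ?_⟩
  · intro x hx y hy
    obtain ⟨_, hx2⟩ := hFmem x hx
    obtain ⟨_, hy2⟩ := hFmem y hy
    have hγd : dist (γ x) (γ y) = |x - y| := hγ.1.2 x hx y hy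
    have t1 : dist (γ x) (γ y) ≤ dist (γ x) (F x) + dist (F x) (F y) + dist (F y) (γ y) :=
      dist_triangle4 _ _ _ _
    have t2 : dist (F x) (F y) ≤ dist (F x) (γ x) + dist (γ x) (γ y) + dist (γ y) (F y) :=
      dist_triangle4 _ _ _ _
    rw [dist_comm (F y) (γ y)] at t1
    rw [dist_comm (F x) (γ x), dist_comm (γ y) (F y)] at t2
    rw [hγd] at t1 t2
    have hc : dist (F y) (γ y) = dist (γ y) (F y) := dist_comm _ _
    simp only [inv_one, one_mul]
    constructor <;> linarith
  · rintro _ ⟨x, hx, rfl⟩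
    exact (hFmem x hx).1

/-- A geodesic metric space is hyperbolic iff for every C > 0 there is
C' > 0 such that the union of two intersecting (1, C)-quasigeodesic subspaces is a
(1, C')-quasigeodesic subspace. -/
theorem hyperbolic_iff_union_of_one_quasigeodesic_subspaces {X : Type*} [MetricSpace X]
    (hgeo : IsGeodesicSpace X) :
    (∃ δ : ℝ, IsDeltaHyperbolic X δ) ↔
      (∀ C : ℝ, 0 < C → ∃ C' : ℝ, 0 < C' ∧
        ∀ A B : Set X, IsQuasigeodesicSubspace 1 C A → IsQuasigeodesicSubspace 1 C B →
          (A ∩ B).Nonempty → IsQuasigeodesicSubspace 1 C' (A ∪ B)) := by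
  constructor
  · rintro ⟨δ₀, hδ₀⟩ C hC
    have hδ : (0:ℝ) ≤ max δ₀ 0 := le_max_right _ _
    have hX : IsDeltaHyperbolic X (max δ₀ 0) := by
      intro a b c f₁ f₂ f₃ v₁ v₂ v₃ h1 h2 h3 x hx
      exact (hδ₀ a b c f₁ f₂ f₃ v₁ v₂ v₃ h1 h2 h3 x hx).trans (le_max_left _ _)
    refine ⟨14*(max δ₀ 0) + 15*C + 25, by linarith, ?_⟩
    rintro A B hA hB ⟨p, hpA, hpB⟩ a ha b hb
    rcases ha with ha | ha <;> rcases hb with hb | hb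
    · obtain ⟨f, v, hf, h0, hv, him⟩ := hA a ha b hb
      exact ⟨f, v, qg_mono (by linarith) hf, h0, hv, him.trans Set.subset_union_left⟩
    · exact mixed_qg hδ hC hX hgeo hA hB hpA hpB ha hb
    · obtain ⟨f, v, h₁, h₂, h₃, h₄⟩ := mixed_qg hδ hC hX hgeo hB hA hpB hpA ha hb
      exact ⟨f, v, h₁, h₂, h₃, by rw [Set.union_comm]; exact h₄⟩
    · obtain ⟨f, v, hf, h0, hv, him⟩ := hB a ha b hb
      exact ⟨f, v, qg_mono (by linarith) hf, h0, hv, him.trans Set.subset_union_right⟩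
  · intro H
    obtain ⟨K₁, hK₁, h₁⟩ := H 1 one_pos
    obtain ⟨K₂, hK₂, h₂⟩ := H K₁ hK₁
    refine ⟨3*K₂, ?_⟩
    intro a b c f₁ f₂ f₃ v₁ v₂ v₃ hf₁ hf₂ hf₃ x hx
    -- U = [a,b] ∪ [a,c] is a (1,K₁)-quasigeodesic subspace
    have hU : IsQuasigeodesicSubspace 1 K₁
        (f₁ '' Set.Icc 0 v₁ ∪ f₃ '' Set.Icc 0 v₃) :=
      h₁ _ _ (seg_qgs hf₁.1 one_pos) (seg_qgs hf₃.1 one_pos)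
        ⟨a, ⟨0, ⟨le_rfl, hf₁.1.1⟩, hf₁.2.1⟩, ⟨0, ⟨le_rfl, hf₃.1.1⟩, hf₃.2.1⟩⟩
    -- A₁ = [b, f₂ x] ⊆ [b,c]
    have hgx : IsGeodesicOn f₂ x :=
      ⟨hx.1, fun y hy y' hy' => hf₂.1.2 y ⟨hy.1, hy.2.trans hx.2⟩ y' ⟨hy'.1, hy'.2.trans hx.2⟩⟩
    have hW := h₂ _ _ (seg_qgs hgx hK₁) hU
      ⟨b, ⟨0, ⟨le_rfl, hx.1⟩, hf₂.2.1⟩, Or.inl ⟨v₁, ⟨hf₁.1.1, le_rfl⟩, hf₁.2.2⟩⟩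
    obtain ⟨h, m, hq, hh0, hhm, him⟩ := hW (f₂ x) (Or.inl ⟨x, ⟨hx.1, le_rfl⟩, rfl⟩)
      c (Or.inr (Or.inr ⟨v₃, ⟨hf₃.1.1, le_rfl⟩, hf₃.2.2⟩))
    refine le_of_forall_pos_le_add ?_
    intro ε hε
    set U := f₁ '' Set.Icc (0:ℝ) v₁ ∪ f₃ '' Set.Icc (0:ℝ) v₃ with hUdef
    set T' := {t | t ∈ Set.Icc (0:ℝ) m ∧ h t ∈ U} with hT'def
    have hmT : m ∈ T' := ⟨⟨hq.1, le_rfl⟩, by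
      rw [hhm]; exact Or.inr ⟨v₃, ⟨hf₃.1.1, le_rfl⟩, hf₃.2.2⟩⟩
    have hT'ne : T'.Nonempty := ⟨m, hmT⟩
    have hT'bdd : BddBelow T' := ⟨0, fun t ht => ht.1.1⟩
    have hts0 : 0 ≤ sInf T' := le_csInf hT'ne fun t ht => ht.1.1
    have htsm : sInf T' ≤ m := csInf_le hT'bdd hmT
    obtain ⟨t₂, ht₂T, ht₂lt⟩ := exists_lt_of_csInf_lt hT'ne
      (show sInf T' < sInf T' + ε/2 by linarith)
    have ht₂i : sInf T' ≤ t₂ := csInf_le hT'bdd ht₂T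
    set t₁ := max (sInf T' - ε/2) 0 with ht₁def
    have ht₁m : t₁ ∈ Set.Icc (0:ℝ) m :=
      ⟨le_max_right _ _, max_le (by linarith) hq.1⟩
    have ht₁le : t₁ ≤ sInf T' := max_le (by linarith) hts0
    have hy : ∃ y, y ∈ Set.Icc (0:ℝ) x ∧ f₂ y = h t₁ := by
      by_cases hcase : sInf T' - ε/2 ≤ 0
      · have ht₁0 : t₁ = 0 := max_eq_right hcase
        exact ⟨x, ⟨hx.1, le_rfl⟩, by rw [ht₁0, hh0]⟩
      · have ht₁e : t₁ = sInf T' - ε/2 := max_eq_left (le_of_lt (not_le.mp hcase))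
        have hnot : h t₁ ∉ U := by
          intro hmem
          have := csInf_le hT'bdd (⟨ht₁m, hmem⟩ : t₁ ∈ T')
          rw [ht₁e] at this
          linarith
        rcases him ⟨t₁, ht₁m, rfl⟩ with ⟨y, hym, hyy⟩ | hmem
        · exact ⟨y, hym, hyy⟩
        · exact absurd hmem hnot
    obtain ⟨y, hym, hyeq⟩ := hy
    -- quasigeodesic estimates
    have hd1 : dist (h t₁) (h m) ≤ (m - t₁) + K₂ := by
      have := (hq.2 t₁ ht₁m m ⟨hq.1, le_rfl⟩).2
      rw [one_mul, abs_of_nonpos (by linarith [ht₁m.2]), neg_sub] at this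
      exact this
    have hd2 : m - K₂ ≤ dist (h 0) (h m) := by
      have := (hq.2 0 ⟨le_rfl, hq.1⟩ m ⟨hq.1, le_rfl⟩).1
      rw [inv_one, one_mul, abs_sub_comm, sub_zero, abs_of_nonneg hq.1] at this
      exact this
    have hd3 : dist (h t₁) (h t₂) ≤ ε + K₂ := by
      have := (hq.2 t₁ ht₁m t₂ ht₂T.1).2
      rw [one_mul, abs_of_nonpos (by linarith), neg_sub] at this
      have h2 : t₂ - t₁ ≤ ε := by
        have := le_max_left (sInf T' - ε/2) 0
        linarith
      linarith
    -- distances along f₂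
    have hyv₂ : y ∈ Set.Icc (0:ℝ) v₂ := ⟨hym.1, hym.2.trans hx.2⟩
    have hxv₂ : x ∈ Set.Icc (0:ℝ) v₂ := hx
    have e1 : dist (f₂ y) c = v₂ - y := by
      rw [← hf₂.2.2, hf₂.1.2 y hyv₂ v₂ ⟨hf₂.1.1, le_rfl⟩,
        abs_of_nonpos (by linarith [hyv₂.2]), neg_sub]
    have e2 : dist (f₂ x) c = v₂ - x := by
      rw [← hf₂.2.2, hf₂.1.2 x hxv₂ v₂ ⟨hf₂.1.1, le_rfl⟩,
        abs_of_nonpos (by linarith [hxv₂.2]), neg_sub]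
    have e3 : dist (f₂ x) (f₂ y) = x - y := by
      rw [hf₂.1.2 x hxv₂ y hyv₂, abs_of_nonneg (by linarith [hym.2])]
    have hd1' : v₂ - y ≤ (m - t₁) + K₂ := by
      rw [← hyeq, hhm, e1] at hd1; exact hd1
    have hd2' : m - K₂ ≤ v₂ - x := by
      rw [hh0, hhm, e2] at hd2; exact hd2
    have hxy : x - y ≤ 2*K₂ := by linarith [ht₁m.1]
    have heq : dist (f₂ y) (h t₂) = dist (h t₁) (h t₂) := by rw [hyeq]
    have tfin : dist (f₂ x) (h t₂) ≤ dist (f₂ x) (f₂ y) + dist (f₂ y) (h t₂) :=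
      dist_triangle _ _ _
    have hinf := Metric.infDist_le_dist_of_mem (x := f₂ x) ht₂T.2
    rw [heq] at tfin
    rw [e3] at tfin
    linarith
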